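/- arXiv:1309.5035 — 3 statements merged into one kernel-verified Lean document; each statement's English description precedes it below -/
import Mathlib

section
/- Let E, F, A be cochain complexes of modules over a ring, let q : E → A and r : F → A be chain maps, and let f : E → F be a homotopy equivalence such that r ∘ f is chain homotopic to q. Then the mapping cones mappingCone(q) and mappingCone(r) are homotopy equivalent cochain complexes. -/
open CategoryTheory CochainComplex

/-- If `q : E ⟶ A`, `r : F ⟶ A` are chain maps and `f : E ⟶ F` is a homotopy
equivalence with `r ∘ f` chain homotopic to `q`, then the mapping cones of `q`
and `r` are homotopy equivalent. -/
theorem stmt_6 {R : Type*} [Ring R]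
    (E F A : CochainComplex (ModuleCat R) ℤ)
    (q : E ⟶ A) (r : F ⟶ A) (f : E ⟶ F) (g : F ⟶ E)
    (hgf : Homotopy (f ≫ g) (𝟙 E)) (hfg : Homotopy (g ≫ f) (𝟙 F))
    (hcomm : Homotopy (f ≫ r) q) :
    Nonempty (HomotopyEquiv (mappingCone q) (mappingCone r)) := by
  let e : HomotopyEquiv E F := ⟨f, g, hgf, hfg⟩
  let e₁ := HomotopyCategory.isoOfHomotopyEquiv e
  have comm : (mappingCone.triangleh q).mor₁ ≫ (Iso.refl
        ((mappingCone.triangleh r).obj₂)).hom = e₁.hom ≫ (mappingCone.triangleh r).mor₁ := by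
    dsimp [e₁, HomotopyCategory.isoOfHomotopyEquiv, mappingCone.triangleh, e]
    erw [Category.comp_id, ← Functor.map_comp]
    exact (HomotopyCategory.eq_of_homotopy _ _ hcomm).symm
  let i := Pretriangulated.isoTriangleOfIso₁₂ _ _
    (HomotopyCategory.mappingCone_triangleh_distinguished q)
    (HomotopyCategory.mappingCone_triangleh_distinguished r)
    e₁ (Iso.refl _) comm
  exact ⟨HomotopyCategory.homotopyEquivOfIso (Pretriangulated.Triangle.π₃.mapIso i)⟩
end

section
/- Let X and Y be cochain complexes of modules over a ring, f : X → Y and g : Y → X chain maps, h a chain homotopy from g∘f to 𝟙_X, and h' a chain homotopy from f∘g to 𝟙_Y. Then there exists a chain homotopy h̃ from g∘f to 𝟙_X such that the degree −1 maps f∘h̃ and h'∘f from X to Y differ by a boundary in the Hom-complex: there exists a degree −2 map j : X → Y with f∘h̃ − h'∘f = d_Y∘j + j∘d_X (up to the standard sign convention). -/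
open CategoryTheory CochainComplex CochainComplex.HomComplex

/-- The homotopies witnessing a homotopy equivalence `f : X ⟶ Y`, `g : Y ⟶ X` can
be corrected: there is a homotopy `h̃` from `g∘f` to `𝟙 X` such that the degree `-1`
maps `f ∘ h̃` and `h' ∘ f` differ by a boundary in the Hom-complex, i.e. by `δ j`
for some degree `-2` map `j`. -/
theorem stmt_7 {R : Type*} [Ring R]
    (X Y : CochainComplex (ModuleCat R) ℤ)
    (f : X ⟶ Y) (g : Y ⟶ X)
    (h : Homotopy (f ≫ g) (𝟙 X)) (h' : Homotopy (g ≫ f) (𝟙 Y)) :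
    ∃ (htilde : Homotopy (f ≫ g) (𝟙 X)) (j : Cochain X Y (-2)),
      δ (-2) (-1) j =
        (Cochain.ofHomotopy htilde).comp (Cochain.ofHom f) (by norm_num) -
          (Cochain.ofHom f).comp (Cochain.ofHomotopy h') (by norm_num) := by
  set p : Cochain X X (-1) := Cochain.ofHomotopy h with hp
  set q : Cochain Y Y (-1) := Cochain.ofHomotopy h' with hq
  set Ff : Cochain X Y 0 := Cochain.ofHom f with hFf
  set Fg : Cochain Y X 0 := Cochain.ofHom g with hFg
  have hδp : δ (-1) 0 p = Cochain.ofHom (f ≫ g) - Cochain.ofHom (𝟙 X) :=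
    δ_ofHomotopy h
  have hδq : δ (-1) 0 q = Cochain.ofHom (g ≫ f) - Cochain.ofHom (𝟙 Y) :=
    δ_ofHomotopy h'
  set t : Cochain X Y (-1) :=
    p.comp Ff (add_zero _) - Ff.comp q (zero_add _) with ht
  -- t is a cocycle
  have hδt : δ (-1) 0 t = 0 := by
    rw [ht, δ_sub, δ_comp_zero_cochain p Ff 0 (neg_add_cancel 1),
      δ_zero_cochain_comp Ff q 0 (neg_add_cancel 1), hδp, hδq]
    simp [hFf, hFg, ← Cochain.ofHom_comp, sub_eq_zero]
  -- the corrected cochain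
  set c : Cochain X X (-1) := t.comp Fg (add_zero _) with hc
  have hδc : δ (-1) 0 c = 0 := by
    rw [hc, δ_comp_zero_cochain t Fg 0 (neg_add_cancel 1), hδt]
    simp [hFg]
  have key : Cochain.ofHom (f ≫ g) = δ (-1) 0 (p - c) + Cochain.ofHom (𝟙 X) := by
    rw [δ_sub, hδc, hδp]; abel
  refine ⟨(Cochain.equivHomotopy (f ≫ g) (𝟙 X)).symm ⟨p - c, key⟩,
    -(t.comp q (by norm_num)), ?_⟩
  have hof : Cochain.ofHomotopy ((Cochain.equivHomotopy (f ≫ g) (𝟙 X)).symm ⟨p - c, key⟩)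
      = p - c := by
    rw [← Cochain.equivHomotopy_apply_coe, Equiv.apply_symm_apply]
  rw [hof]
  rw [δ_neg, δ_comp t q (by norm_num) 0 0 (-1) (by norm_num) (by norm_num) (by norm_num),
    hδt, hδq]
  have hcomp : c.comp Ff (add_zero _) =
      t.comp (Cochain.ofHom (g ≫ f)) (add_zero _) := by
    rw [hc, Cochain.ofHom_comp, ← Cochain.comp_assoc_of_third_is_zero_cochain]
  simp only [Cochain.sub_comp, Cochain.comp_sub, Cochain.comp_zero, Cochain.zero_comp,
    hcomp, Cochain.comp_id]
  simp only [ht]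
  simp only [show ((-1 : ℤ).negOnePow) = -1 from by rw [Int.negOnePow_neg, Int.negOnePow_one], Units.neg_smul, one_smul]
  abel
end

section
/- Let k be a field of characteristic 0 (or any commutative ring in which 2 is invertible), and let P, B₁, B₂, C be k-modules with k-linear maps ν_i : P → B_i, μ_i : B_i → P, η_i : B_i → C, κ_i : C → B_i (i = 1,2) satisfying: η_i ∘ κ_i = 𝟙_C, ν_i ∘ μ_i = 𝟙_{B_i}, ν₂ ∘ μ₁ = −κ₂ ∘ η₁, ν₁ ∘ μ₂ = −κ₁ ∘ η₂, and η₁ ∘ ν₁ = −η₂ ∘ ν₂. Then: (a) the map δ : B₁ ⊕ B₂ → C, (b₁,b₂) ↦ η₁(b₁) + η₂(b₂), is surjective; and (b) the sequence P →γ B₁ ⊕ B₂ →δ C with γ(p) = (ν₁(p), ν₂(p)) is exact at B₁ ⊕ B₂ (i.e. ker δ = im γ). -/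
/-- Abstract form of the braiding-criterion exactness lemma: given the diagram of
`k`-modules with `ηᵢ ∘ κᵢ = id`, `νᵢ ∘ μᵢ = id`, `ν₂ ∘ μ₁ = −κ₂ ∘ η₁`,
`ν₁ ∘ μ₂ = −κ₁ ∘ η₂` and `η₁ ∘ ν₁ = −η₂ ∘ ν₂`, the map
`δ : B₁ ⊕ B₂ → C` is surjective and the sequence `P → B₁ ⊕ B₂ → C` is exact in the
middle. Here `2` is assumed invertible in `k`. -/
theorem stmt_9 {k : Type*} [CommRing k] [Invertible (2 : k)]
    {P B₁ B₂ C : Type*}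
    [AddCommGroup P] [AddCommGroup B₁] [AddCommGroup B₂] [AddCommGroup C]
    [Module k P] [Module k B₁] [Module k B₂] [Module k C]
    (ν₁ : P →ₗ[k] B₁) (ν₂ : P →ₗ[k] B₂) (μ₁ : B₁ →ₗ[k] P) (μ₂ : B₂ →ₗ[k] P)
    (η₁ : B₁ →ₗ[k] C) (η₂ : B₂ →ₗ[k] C) (κ₁ : C →ₗ[k] B₁) (κ₂ : C →ₗ[k] B₂)
    (h1 : η₁ ∘ₗ κ₁ = LinearMap.id) (h2 : η₂ ∘ₗ κ₂ = LinearMap.id)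
    (h3 : ν₁ ∘ₗ μ₁ = LinearMap.id) (h4 : ν₂ ∘ₗ μ₂ = LinearMap.id)
    (h5 : ν₂ ∘ₗ μ₁ = -(κ₂ ∘ₗ η₁)) (h6 : ν₁ ∘ₗ μ₂ = -(κ₁ ∘ₗ η₂))
    (h7 : η₁ ∘ₗ ν₁ = -(η₂ ∘ₗ ν₂)) :
    Function.Surjective (fun bc : B₁ × B₂ => η₁ bc.1 + η₂ bc.2) ∧
      (∀ bc : B₁ × B₂, η₁ bc.1 + η₂ bc.2 = 0 ↔ ∃ p : P, ν₁ p = bc.1 ∧ ν₂ p = bc.2) := by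
  have H1 : ∀ c, η₁ (κ₁ c) = c := fun c => congrArg (fun f => f c) (congrArg DFunLike.coe h1)
  have H3 : ∀ b, ν₁ (μ₁ b) = b := fun b => congrArg (fun f => f b) (congrArg DFunLike.coe h3)
  have H4 : ∀ b, ν₂ (μ₂ b) = b := fun b => congrArg (fun f => f b) (congrArg DFunLike.coe h4)
  have H5 : ∀ b, ν₂ (μ₁ b) = -κ₂ (η₁ b) := fun b =>
    congrArg (fun f => f b) (congrArg DFunLike.coe h5)
  have H6 : ∀ b, ν₁ (μ₂ b) = -κ₁ (η₂ b) := fun b =>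
    congrArg (fun f => f b) (congrArg DFunLike.coe h6)
  have H7 : ∀ p, η₁ (ν₁ p) = -η₂ (ν₂ p) := fun p =>
    congrArg (fun f => f p) (congrArg DFunLike.coe h7)
  constructor
  · intro c
    exact ⟨(κ₁ c, 0), by simpa using H1 c⟩
  · intro ⟨b₁, b₂⟩
    constructor
    · intro hb
      refine ⟨μ₁ (b₁ - κ₁ (η₁ b₁)) + μ₂ b₂, ?_, ?_⟩
      · have hη : η₂ b₂ = -η₁ b₁ := by
          have := hb; simp only at this ⊢; linear_combination (norm := abel) this
        simp [map_add, H3, H6, hη, H1, map_sub]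
      · simp [map_add, H5, H4, map_sub, H1]
    · rintro ⟨p, hp1, hp2⟩
      rw [show b₁ = ν₁ p from hp1.symm, show b₂ = ν₂ p from hp2.symm, H7]
      abel
end
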